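/- Let μ be a pseudo-positive moment measure on ℝ^d. Then for each k ∈ ℕ₀ and l = 1,…,a_k there exists a unique non-negative moment measure μ_{k,l} on [0,∞) such that ∫_0^∞ h(t) dμ_{k,l}(t) = ∫_{ℝ^d} h(|x|) Y_{k,l}(x) dμ(x) holds for all polynomially bounded continuous functions h on [0,∞). Moreover, for every f ∈ C^×(ℝ^d) ∩ C_pol(ℝ^d) one has ∫_{ℝ^d} f dμ = Σ_{k=0}^∞ Σ_{l=1}^{a_k} ∫_0^∞ f_{k,l}(r) r^{-k} dμ_{k,l}(r), where f_{k,l} are the Laplace–Fourier coefficients of f (the sum being finite). -/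

import Mathlib

open MeasureTheory MvPolynomial Metric
open scoped ComplexOrder ENNReal

noncomputable section

/-- `d`-dimensional Euclidean space. -/
abbrev E (d : ℕ) := EuclideanSpace ℝ (Fin d)

/-- The (surface) measure `dθ` on the unit sphere `S^{d-1}`. -/
noncomputable def sphMeas (d : ℕ) : Measure (sphere (0 : E d) 1) :=
  (volume : Measure (E d)).toSphere

/-- A bundled orthonormal basis `Y_{k,l}`, `l = 1,…,a_k`, of the spaces `H_k(ℝ^d)` of
real-valued harmonic polynomials homogeneous of degree `k`, orthonormal with respect to
`⟨f,g⟩ = ∫_{S^{d-1}} f g dθ`. -/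
structure HarmonicBasis (d : ℕ) where
  a : ℕ → ℕ
  Y : (k : ℕ) → Fin (a k) → MvPolynomial (Fin d) ℝ
  harmonic : ∀ k l, (∑ i, pderiv i (pderiv i (Y k l))) = 0
  homogeneous : ∀ k l, (Y k l).IsHomogeneous k
  orthonormal : ∀ (k k' : ℕ) (l : Fin (a k)) (l' : Fin (a k')),
    (∫ θ : sphere (0 : E d) 1,
        (eval (fun i => (θ : E d) i) (Y k l)) * (eval (fun i => (θ : E d) i) (Y k' l'))
      ∂(sphMeas d)) = if k = k' ∧ (l : ℕ) = (l' : ℕ) then 1 else 0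
  complete : ∀ (k : ℕ) (P : MvPolynomial (Fin d) ℝ),
    (∑ i, pderiv i (pderiv i P)) = 0 → P.IsHomogeneous k →
      P ∈ Submodule.span ℝ (Set.range (Y k))

/-- Evaluation of a complex polynomial in `d` variables at a point of `ℝ^d`. -/
def evalC {d : ℕ} (P : MvPolynomial (Fin d) ℂ) (x : E d) : ℂ :=
  eval (fun i => (x i : ℂ)) P

/-- The polynomial `|x|² = x₁² + … + x_d²`. -/
def normSqP (d : ℕ) : MvPolynomial (Fin d) ℂ := ∑ i, X i ^ 2

/-- Integral of a (complex- or real-valued) function with respect to a signed measure,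
via the Jordan decomposition. -/
noncomputable def sInt {α : Type*} {G : Type*} [MeasurableSpace α] [NormedAddCommGroup G]
    [NormedSpace ℝ G] (μ : SignedMeasure α) (f : α → G) : G :=
  (∫ x, f x ∂μ.toJordanDecomposition.posPart) - ∫ x, f x ∂μ.toJordanDecomposition.negPart

/-- A signed measure is a moment measure if every polynomial is integrable with respect to
its total variation. -/
def IsMomentMeasure {d : ℕ} (μ : SignedMeasure (E d)) : Prop :=
  ∀ P : MvPolynomial (Fin d) ℂ, Integrable (evalC P) μ.totalVariation

namespace HarmonicBasis

variable {d : ℕ} (B : HarmonicBasis d)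

/-- `Y_{k,l}` as a function on `ℝ^d`. -/
def Yf (k : ℕ) (l : Fin (B.a k)) (x : E d) : ℝ := eval (fun i => x i) (B.Y k l)

/-- `Y_{k,l}` as a complex polynomial. -/
def YC (k : ℕ) (l : Fin (B.a k)) : MvPolynomial (Fin d) ℂ :=
  (B.Y k l).map (algebraMap ℝ ℂ)

/-- The Laplace–Fourier coefficient `f_{k,l}(r) = ∫_{S^{d-1}} f(rθ) Y_{k,l}(θ) dθ`. -/
noncomputable def lfCoeff (f : E d → ℂ) (k : ℕ) (l : Fin (B.a k)) (r : ℝ) : ℂ :=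
  ∫ θ : sphere (0 : E d) 1, f (r • (θ : E d)) * (B.Yf k l (θ : E d) : ℂ) ∂(sphMeas d)

/-- `GaussDecomp B f K p` : `p` is a Gauss (Laplace–Fourier) decomposition of the polynomial
`f`, i.e. `f(x) = ∑_{k=0}^{K} ∑_{l=1}^{a_k} p_{k,l}(|x|²) Y_{k,l}(x)` with `p_{k,l} = 0` for
`k > K`. -/
def GaussDecomp (f : MvPolynomial (Fin d) ℂ) (K : ℕ)
    (p : (k : ℕ) → Fin (B.a k) → Polynomial ℂ) : Prop :=
  (∀ k, K < k → ∀ l, p k l = 0) ∧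
    f = ∑ k ∈ Finset.range (K + 1), ∑ l,
      Polynomial.aeval (normSqP d) (p k l) * B.YC k l

/-- The component functional `T_{k,l}(p) = T(p(|x|²) Y_{k,l}(x))`. -/
def component (T : MvPolynomial (Fin d) ℂ → ℂ) (k : ℕ) (l : Fin (B.a k))
    (p : Polynomial ℂ) : ℂ :=
  T (Polynomial.aeval (normSqP d) p * B.YC k l)

/-- A functional `T` on `ℂ[x₁,…,x_d]` is pseudo-positive definite (w.r.t. the basis `Y_{k,l}`)
if `T_{k,l}(p* p) ≥ 0` and `T_{k,l}(t · p*(t) p(t)) ≥ 0` for all univariate `p` and all `k, l`. -/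
def PPD (T : MvPolynomial (Fin d) ℂ → ℂ) : Prop :=
  ∀ (k : ℕ) (l : Fin (B.a k)) (p : Polynomial ℂ),
    0 ≤ B.component T k l (p.map (starRingEnd ℂ) * p) ∧
    0 ≤ B.component T k l (Polynomial.X * (p.map (starRingEnd ℂ) * p))

/-- A signed measure `μ` on `ℝ^d` is pseudo-positive (w.r.t. the basis `Y_{k,l}`) if
`∫ h(|x|) Y_{k,l}(x) dμ ≥ 0` for every non-negative continuous compactly supported `h`. -/
def PseudoPositive (μ : SignedMeasure (E d)) : Prop :=
  ∀ (k : ℕ) (l : Fin (B.a k)) (h : ℝ → ℝ), Continuous h → HasCompactSupport h →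
    (∀ t, 0 ≤ h t) → 0 ≤ sInt μ (fun x => h ‖x‖ * B.Yf k l x)

/-- `ν` is the family of component measures `μ_{k,l}` of the signed measure `μ`, i.e.
`∫_0^∞ h dμ_{k,l} = ∫_{ℝ^d} h(|x|) Y_{k,l}(x) dμ` for all continuous compactly supported `h`. -/
def IsComponentFamily (μ : SignedMeasure (E d))
    (ν : (k : ℕ) → Fin (B.a k) → Measure ℝ) : Prop :=
  ∀ k l, (ν k l) (Set.Iio 0) = 0 ∧
    ∀ h : ℝ → ℝ, Continuous h → HasCompactSupport h →
      ∫ t, h t ∂(ν k l) = sInt μ (fun x => h ‖x‖ * B.Yf k l x)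

/-- The summability condition `C_N = ∑_{k,l} ∫_0^∞ r^N r^{-k} dσ_{k,l}(r) < ∞` for all `N`. -/
def SummCond (σ : (k : ℕ) → Fin (B.a k) → Measure ℝ) : Prop :=
  ∀ N : ℕ, (∑' k : ℕ, ∑ l, ∫⁻ r, (ENNReal.ofReal r) ^ N * ((ENNReal.ofReal r) ^ k)⁻¹
    ∂(σ k l)) < ⊤

end HarmonicBasis

/-- The set `W_τ^{Sti}` of all non-negative moment measures on `[0,∞)` having the same
moments as `τ`. -/
def WSti (τ : Measure ℝ) : Set (Measure ℝ) :=
  {ρ | ρ (Set.Iio 0) = 0 ∧ (∀ m : ℕ, Integrable (fun t => t ^ m) ρ) ∧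
    ∀ m : ℕ, ∫ t, t ^ m ∂ρ = ∫ t, t ^ m ∂τ}

/-- A measure `ν` on `[0,∞)` is determined in the sense of Stieltjes if it is the only
non-negative measure on `[0,∞)` with its moments. -/
def StieltjesDeterminate (ν : Measure ℝ) : Prop :=
  ∀ τ : Measure ℝ, τ ∈ WSti ν → τ = ν

/-- A polynomially bounded real function. -/
def PolyBnd (h : ℝ → ℝ) : Prop := ∃ (C : ℝ) (N : ℕ), ∀ t : ℝ, |h t| ≤ C * (1 + |t|) ^ N

/-- A polynomially bounded complex function. -/
def PolyBndC (g : ℝ → ℂ) : Prop := ∃ (C : ℝ) (N : ℕ), ∀ t : ℝ, ‖g t‖ ≤ C * (1 + |t|) ^ N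

section Aux
open MeasureTheory

namespace HarmonicBasis

variable {d : ℕ} (B : HarmonicBasis d)

lemma continuous_Yf (k : ℕ) (l : Fin (B.a k)) : Continuous (B.Yf k l) :=
  (B.Y k l).continuous_eval.comp (continuous_pi fun i => (EuclideanSpace.proj (𝕜 := ℝ) i).continuous)

lemma evalC_YC (k : ℕ) (l : Fin (B.a k)) (x : E d) :
    evalC (B.YC k l) x = ((B.Yf k l x : ℝ) : ℂ) := by
  rw [evalC, YC, MvPolynomial.eval_map, Yf]
  exact ((MvPolynomial.eval₂_comp_left (Complex.ofRealHom) (RingHom.id ℝ) (fun i => x i) (B.Y k l)).symm ▸ rfl)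

end HarmonicBasis

lemma evalC_normSqP {d : ℕ} (x : E d) : evalC (normSqP d) x = ((‖x‖ ^ 2 : ℝ) : ℂ) := by
  have hn : (‖x‖ ^ 2 : ℝ) = ∑ i, x i ^ 2 := by
    rw [EuclideanSpace.norm_eq]
    rw [Real.sq_sqrt (by positivity)]
    simp [sq_abs]
  rw [hn, evalC, normSqP]
  push_cast
  simp

end Aux
section Aux2
open MeasureTheory

variable {d : ℕ} (B : HarmonicBasis d) (μ : SignedMeasure (E d))

/-- Main integrability lemma: anything dominated by `C (1+|x|)^N |Y_{k,l}(x)|` is integrable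
w.r.t. the total variation of a moment measure. -/
lemma integrable_dom (hmom : IsMomentMeasure μ) (k : ℕ) (l : Fin (B.a k))
    {F : Type*} [NormedAddCommGroup F] {f : E d → F}
    (hf : AEStronglyMeasurable f μ.totalVariation) (C : ℝ) (N : ℕ)
    (hb : ∀ x, ‖f x‖ ≤ C * (1 + ‖x‖) ^ N * |B.Yf k l x|) :
    Integrable f μ.totalVariation := by
  set Q : MvPolynomial (Fin d) ℂ :=
    (MvPolynomial.C (((|C| : ℝ) : ℂ))) * ((2 * (1 + normSqP d)) ^ N * B.YC k l) with hQ
  have hev : ∀ x : E d, evalC Q x = ((|C| * (2 * (1 + ‖x‖ ^ 2)) ^ N * B.Yf k l x : ℝ) : ℂ) := by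
    intro x
    have : evalC Q x
        = ((|C| : ℝ) : ℂ) * ((2 * (1 + evalC (normSqP d) x)) ^ N * evalC (B.YC k l) x) := by
      simp [hQ, evalC]
    rw [this, evalC_normSqP, B.evalC_YC]
    push_cast
    ring
  refine (hmom Q).norm.mono' hf ?_
  refine Filter.Eventually.of_forall fun x => ?_
  have h1 : ‖evalC Q x‖ = |C| * (2 * (1 + ‖x‖ ^ 2)) ^ N * |B.Yf k l x| := by
    rw [hev, Complex.norm_real, Real.norm_eq_abs, abs_mul, abs_mul,
      abs_of_nonneg (abs_nonneg C),
      abs_of_nonneg (by positivity : (0:ℝ) ≤ (2 * (1 + ‖x‖ ^ 2)) ^ N)]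
  rw [h1]
  calc ‖f x‖ ≤ C * (1 + ‖x‖) ^ N * |B.Yf k l x| := hb x
    _ ≤ |C| * (2 * (1 + ‖x‖ ^ 2)) ^ N * |B.Yf k l x| := by
        have h2 : (1 + ‖x‖) ^ N ≤ (2 * (1 + ‖x‖ ^ 2)) ^ N := by
          apply pow_le_pow_left₀ (by positivity)
          nlinarith [norm_nonneg x, sq_nonneg (‖x‖ - 1)]
        calc C * (1 + ‖x‖) ^ N * |B.Yf k l x|
            ≤ |C| * (1 + ‖x‖) ^ N * |B.Yf k l x| := by
              have := le_abs_self C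
              have h3 : (0:ℝ) ≤ (1 + ‖x‖) ^ N * |B.Yf k l x| := by positivity
              nlinarith
          _ ≤ |C| * (2 * (1 + ‖x‖ ^ 2)) ^ N * |B.Yf k l x| :=
              mul_le_mul_of_nonneg_right
                (mul_le_mul_of_nonneg_left h2 (abs_nonneg C)) (abs_nonneg _)

lemma integrable_Yf (hmom : IsMomentMeasure μ) (k : ℕ) (l : Fin (B.a k)) :
    Integrable (B.Yf k l) μ.totalVariation := by
  refine integrable_dom B μ hmom k l ((B.continuous_Yf k l).aestronglyMeasurable) 1 0 fun x => ?_
  simp [Real.norm_eq_abs]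

/-- Integrability of `h(‖x‖) Y(x)`-weighted functions, abstract weight. -/
lemma integrable_wt (hmom : IsMomentMeasure μ) (k : ℕ) (l : Fin (B.a k))
    {w : ℝ → ℝ} (hw : Continuous w) (C : ℝ) (N : ℕ)
    (hb : ∀ t, |w t| ≤ C * (1 + |t|) ^ N) :
    Integrable (fun x => w ‖x‖ * |B.Yf k l x|) μ.totalVariation := by
  refine integrable_dom B μ hmom k l ?_ C N fun x => ?_
  · exact ((hw.comp continuous_norm).mul (B.continuous_Yf k l).abs).aestronglyMeasurable
  · rw [Real.norm_eq_abs, abs_mul, abs_abs]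
    have := hb ‖x‖
    rw [abs_of_nonneg (norm_nonneg x)] at this
    exact mul_le_mul_of_nonneg_right this (abs_nonneg _)

end Aux2
section Aux3
open MeasureTheory

variable {d : ℕ} (B : HarmonicBasis d) (μ : SignedMeasure (E d))

/-- Positive part auxiliary measure. -/
noncomputable def Pmeas (k : ℕ) (l : Fin (B.a k)) : Measure (E d) :=
  (μ.toJordanDecomposition.posPart).withDensity (fun x => ENNReal.ofReal (B.Yf k l x)) +
  (μ.toJordanDecomposition.negPart).withDensity (fun x => ENNReal.ofReal (-B.Yf k l x))

noncomputable def Nmeas (k : ℕ) (l : Fin (B.a k)) : Measure (E d) :=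
  (μ.toJordanDecomposition.posPart).withDensity (fun x => ENNReal.ofReal (-B.Yf k l x)) +
  (μ.toJordanDecomposition.negPart).withDensity (fun x => ENNReal.ofReal (B.Yf k l x))

noncomputable def Prad (k : ℕ) (l : Fin (B.a k)) : Measure ℝ :=
  (Pmeas B μ k l).map (fun x => ‖x‖)

noncomputable def Nrad (k : ℕ) (l : Fin (B.a k)) : Measure ℝ :=
  (Nmeas B μ k l).map (fun x => ‖x‖)

lemma posPart_le_tv : μ.toJordanDecomposition.posPart ≤ μ.totalVariation :=
  Measure.le_add_right le_rfl

lemma negPart_le_tv : μ.toJordanDecomposition.negPart ≤ μ.totalVariation :=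
  Measure.le_add_left le_rfl

lemma isFiniteMeasure_Pmeas (hmom : IsMomentMeasure μ) (k : ℕ) (l : Fin (B.a k)) :
    IsFiniteMeasure (Pmeas B μ k l) := by
  have h1 := (integrable_Yf B μ hmom k l)
  haveI := isFiniteMeasure_withDensity_ofReal
    ((h1.mono_measure (posPart_le_tv μ)).hasFiniteIntegral)
  haveI := isFiniteMeasure_withDensity_ofReal
    ((h1.neg.mono_measure (negPart_le_tv μ)).hasFiniteIntegral)
  rw [Pmeas]
  infer_instance

lemma isFiniteMeasure_Nmeas (hmom : IsMomentMeasure μ) (k : ℕ) (l : Fin (B.a k)) :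
    IsFiniteMeasure (Nmeas B μ k l) := by
  have h1 := (integrable_Yf B μ hmom k l)
  haveI := isFiniteMeasure_withDensity_ofReal
    ((h1.neg.mono_measure (posPart_le_tv μ)).hasFiniteIntegral)
  haveI := isFiniteMeasure_withDensity_ofReal
    ((h1.mono_measure (negPart_le_tv μ)).hasFiniteIntegral)
  rw [Nmeas]
  infer_instance

lemma Prad_Iio (k : ℕ) (l : Fin (B.a k)) : (Prad B μ k l) (Set.Iio 0) = 0 := by
  rw [Prad, Measure.map_apply measurable_norm measurableSet_Iio]
  convert measure_empty
  · ext x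
    simp [norm_nonneg, not_lt.mpr (norm_nonneg x)]
  all_goals infer_instance

end Aux3
section Aux4
open MeasureTheory

variable {d : ℕ} (B : HarmonicBasis d) (μ : SignedMeasure (E d))

lemma toNNReal_coe_sub (a : ℝ) : ((a.toNNReal : ℝ)) - (((-a).toNNReal : ℝ)) = a := by
  simp only [Real.coe_toNNReal']
  rcases le_total a 0 with h | h
  · rw [max_eq_right h, max_eq_left (neg_nonneg.mpr h)]; ring
  · rw [max_eq_left h, max_eq_right (neg_nonpos.mpr h)]; ring

/-- Change of variables: integrals over `Prad`/`Nrad` versus `sInt`. -/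
lemma key_cov {G : Type*} [NormedAddCommGroup G] [NormedSpace ℝ G]
    (hmom : IsMomentMeasure μ) (k : ℕ) (l : Fin (B.a k))
    {g : ℝ → G} (hg : Continuous g)
    (hint : Integrable (fun x => ‖g ‖x‖‖ * |B.Yf k l x|) μ.totalVariation) :
    Integrable g (Prad B μ k l) ∧ Integrable g (Nrad B μ k l) ∧
    (∫ t, g t ∂(Prad B μ k l)) - ∫ t, g t ∂(Nrad B μ k l)
      = sInt μ (fun x => (B.Yf k l x) • g ‖x‖) := by
  set Y : E d → ℝ := B.Yf k l with hYdef
  have hY : Continuous Y := B.continuous_Yf k l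
  set μp := μ.toJordanDecomposition.posPart
  set μn := μ.toJordanDecomposition.negPart
  -- generic integrability of weighted integrands
  have A1 : ∀ (ρ : Measure (E d)), ρ ≤ μ.totalVariation → ∀ (w : E d → ℝ), Continuous w →
      (∀ x, |w x| ≤ |Y x|) → Integrable (fun x => w x • g ‖x‖) ρ := by
    intro ρ hρ w hw hwb
    refine Integrable.mono (hint.mono_measure hρ)
      ((hw.smul (hg.comp continuous_norm)).aestronglyMeasurable)
      (Filter.Eventually.of_forall fun x => ?_)
    rw [norm_smul, Real.norm_eq_abs, Real.norm_eq_abs, abs_mul, abs_norm, abs_abs]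
    rw [mul_comm (‖g ‖x‖‖)]
    exact mul_le_mul_of_nonneg_right (hwb x) (norm_nonneg _)
  have hYp : ∀ x, |((Y x).toNNReal : ℝ)| ≤ |Y x| := by
    intro x; rw [Real.coe_toNNReal', abs_of_nonneg (le_max_right _ _)]
    exact max_le (le_abs_self _) (abs_nonneg _)
  have hYn : ∀ x, |(((-Y x).toNNReal : ℝ))| ≤ |Y x| := by
    intro x; rw [Real.coe_toNNReal', abs_of_nonneg (le_max_right _ _)]
    exact max_le (neg_le_abs _) (abs_nonneg _)
  have hcp : Continuous fun x => ((Y x).toNNReal : ℝ) :=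
    NNReal.continuous_coe.comp (continuous_real_toNNReal.comp hY)
  have hcn : Continuous fun x => (((-Y x).toNNReal : ℝ)) :=
    NNReal.continuous_coe.comp (continuous_real_toNNReal.comp hY.neg)
  have hmp : Measurable fun x => (Y x).toNNReal := hY.measurable.real_toNNReal
  have hmn : Measurable fun x => (-Y x).toNNReal := hY.neg.measurable.real_toNNReal
  -- nnreal smul = real smul
  have smul_eq : ∀ (w : E d → NNReal), (fun x => w x • g ‖x‖) = fun x => ((w x : ℝ)) • g ‖x‖ := by
    intro w; funext x; rw [NNReal.smul_def]
  -- withDensity rewrite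
  have wd_eq : ∀ (w : E d → ℝ), (fun x => ENNReal.ofReal (w x)) =
      (fun x => ((w x).toNNReal : ℝ≥0∞)) := fun w => rfl
  -- the four integrability facts
  have i1 := A1 μp (posPart_le_tv μ) _ hcp hYp
  have i2 := A1 μn (negPart_le_tv μ) _ hcn hYn
  have i3 := A1 μp (posPart_le_tv μ) _ hcn hYn
  have i4 := A1 μn (negPart_le_tv μ) _ hcp hYp
  -- integrability over withDensity pieces
  have j1 : Integrable (fun x => g ‖x‖) (μp.withDensity fun x => ENNReal.ofReal (Y x)) := by
    rw [wd_eq, integrable_withDensity_iff_integrable_smul hmp, smul_eq]; exact i1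
  have j2 : Integrable (fun x => g ‖x‖) (μn.withDensity fun x => ENNReal.ofReal (-Y x)) := by
    rw [wd_eq, integrable_withDensity_iff_integrable_smul hmn, smul_eq]; exact i2
  have j3 : Integrable (fun x => g ‖x‖) (μp.withDensity fun x => ENNReal.ofReal (-Y x)) := by
    rw [wd_eq, integrable_withDensity_iff_integrable_smul hmn, smul_eq]; exact i3
  have j4 : Integrable (fun x => g ‖x‖) (μn.withDensity fun x => ENNReal.ofReal (Y x)) := by
    rw [wd_eq, integrable_withDensity_iff_integrable_smul hmp, smul_eq]; exact i4
  have hP : Integrable (fun x => g ‖x‖) (Pmeas B μ k l) := by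
    rw [Pmeas]; exact j1.add_measure j2
  have hN : Integrable (fun x => g ‖x‖) (Nmeas B μ k l) := by
    rw [Nmeas]; exact j3.add_measure j4
  have gP : Integrable g (Prad B μ k l) := by
    rw [Prad]
    exact (integrable_map_measure hg.aestronglyMeasurable measurable_norm.aemeasurable).mpr hP
  have gN : Integrable g (Nrad B μ k l) := by
    rw [Nrad]
    exact (integrable_map_measure hg.aestronglyMeasurable measurable_norm.aemeasurable).mpr hN
  refine ⟨gP, gN, ?_⟩
  have mapP : ∫ t, g t ∂(Prad B μ k l) = ∫ x, g ‖x‖ ∂(Pmeas B μ k l) :=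
    integral_map measurable_norm.aemeasurable hg.aestronglyMeasurable
  have mapN : ∫ t, g t ∂(Nrad B μ k l) = ∫ x, g ‖x‖ ∂(Nmeas B μ k l) :=
    integral_map measurable_norm.aemeasurable hg.aestronglyMeasurable
  have e1 : ∫ x, g ‖x‖ ∂(μp.withDensity fun x => ENNReal.ofReal (Y x))
      = ∫ x, ((Y x).toNNReal : ℝ) • g ‖x‖ ∂μp := by
    rw [wd_eq, integral_withDensity_eq_integral_smul hmp, smul_eq]
  have e2 : ∫ x, g ‖x‖ ∂(μn.withDensity fun x => ENNReal.ofReal (-Y x))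
      = ∫ x, (((-Y x).toNNReal : ℝ)) • g ‖x‖ ∂μn := by
    rw [wd_eq, integral_withDensity_eq_integral_smul hmn, smul_eq]
  have e3 : ∫ x, g ‖x‖ ∂(μp.withDensity fun x => ENNReal.ofReal (-Y x))
      = ∫ x, (((-Y x).toNNReal : ℝ)) • g ‖x‖ ∂μp := by
    rw [wd_eq, integral_withDensity_eq_integral_smul hmn, smul_eq]
  have e4 : ∫ x, g ‖x‖ ∂(μn.withDensity fun x => ENNReal.ofReal (Y x))
      = ∫ x, ((Y x).toNNReal : ℝ) • g ‖x‖ ∂μn := by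
    rw [wd_eq, integral_withDensity_eq_integral_smul hmp, smul_eq]
  rw [mapP, mapN, Pmeas, Nmeas, integral_add_measure j1 j2, integral_add_measure j3 j4,
    e1, e2, e3, e4]
  have subp : ∫ x, ((Y x).toNNReal : ℝ) • g ‖x‖ ∂μp - ∫ x, (((-Y x).toNNReal : ℝ)) • g ‖x‖ ∂μp
      = ∫ x, Y x • g ‖x‖ ∂μp := by
    rw [← integral_sub i1 i3]
    congr 1; funext x
    rw [← sub_smul, toNNReal_coe_sub]
  have subn : ∫ x, ((Y x).toNNReal : ℝ) • g ‖x‖ ∂μn - ∫ x, (((-Y x).toNNReal : ℝ)) • g ‖x‖ ∂μn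
      = ∫ x, Y x • g ‖x‖ ∂μn := by
    rw [← integral_sub i4 i2]
    congr 1; funext x
    rw [← sub_smul, toNNReal_coe_sub]
  rw [sInt]
  rw [← subp, ← subn]
  abel

end Aux4
section Aux5
open MeasureTheory Filter Topology

lemma le_of_closed_le {μ ν : Measure ℝ} [IsFiniteMeasure μ] [IsFiniteMeasure ν]
    (h : ∀ F : Set ℝ, IsClosed F → μ F ≤ ν F) : μ ≤ ν := by
  rw [Measure.le_iff]
  intro s hs
  rw [hs.measure_eq_iSup_isClosed_of_ne_top (measure_ne_top μ s)]
  refine iSup_le fun F => iSup_le fun hFs => iSup_le fun hF => ?_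
  exact (h F hF).trans (measure_mono hFs)

variable {d : ℕ} (B : HarmonicBasis d) (μ : SignedMeasure (E d))

lemma integrable_wtG (hmom : IsMomentMeasure μ) (k : ℕ) (l : Fin (B.a k))
    {G : Type*} [NormedAddCommGroup G] {g : ℝ → G} (hg : Continuous g) (C : ℝ) (N : ℕ)
    (hb : ∀ t, ‖g t‖ ≤ C * (1 + |t|) ^ N) :
    Integrable (fun x => ‖g ‖x‖‖ * |B.Yf k l x|) μ.totalVariation := by
  refine integrable_wt B μ hmom k l (w := fun t => ‖g t‖) hg.norm C N fun t => ?_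
  rw [abs_of_nonneg (norm_nonneg _)]
  exact hb t

/-- Combined change of variables with polynomial bound hypothesis. -/
lemma main_cov {G : Type*} [NormedAddCommGroup G] [NormedSpace ℝ G]
    (hmom : IsMomentMeasure μ) (k : ℕ) (l : Fin (B.a k))
    {g : ℝ → G} (hg : Continuous g) (C : ℝ) (N : ℕ)
    (hb : ∀ t, ‖g t‖ ≤ C * (1 + |t|) ^ N) :
    Integrable g (Prad B μ k l) ∧ Integrable g (Nrad B μ k l) ∧
    (∫ t, g t ∂(Prad B μ k l)) - ∫ t, g t ∂(Nrad B μ k l)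
      = sInt μ (fun x => (B.Yf k l x) • g ‖x‖) :=
  key_cov B μ hmom k l hg (integrable_wtG B μ hmom k l hg C N hb)

/-- Comparison for continuous compactly supported non-negative functions. -/
lemma compare_cc (hmom : IsMomentMeasure μ) (hpp : B.PseudoPositive μ)
    (k : ℕ) (l : Fin (B.a k)) {h : ℝ → ℝ} (hc : Continuous h) (hcs : HasCompactSupport h)
    (h0 : ∀ t, 0 ≤ h t) :
    ∫ t, h t ∂(Nrad B μ k l) ≤ ∫ t, h t ∂(Prad B μ k l) := by
  obtain ⟨M, hM⟩ := hcs.exists_bound_of_continuous hc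
  have hb : ∀ t, ‖h t‖ ≤ M * (1 + |t|) ^ 0 := by
    intro t; simpa using hM t
  obtain ⟨_, _, hcov⟩ := main_cov B μ hmom k l hc M 0 hb
  have hpos := hpp k l h hc hcs h0
  have : sInt μ (fun x => (B.Yf k l x) • h ‖x‖) = sInt μ (fun x => h ‖x‖ * B.Yf k l x) := by
    simp only [smul_eq_mul, mul_comm]
  rw [this] at hcov
  linarith

/-- The cutoff functions. -/
def cutoff (n : ℕ) (t : ℝ) : ℝ := max 0 (min 1 ((n : ℝ) + 1 - |t|))

lemma cutoff_cont (n : ℕ) : Continuous (cutoff n) :=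
  continuous_const.max (continuous_const.min (continuous_const.sub continuous_abs))

lemma cutoff_nonneg (n : ℕ) (t : ℝ) : 0 ≤ cutoff n t := le_max_left _ _

lemma cutoff_le_one (n : ℕ) (t : ℝ) : cutoff n t ≤ 1 :=
  max_le zero_le_one (min_le_left _ _)

lemma cutoff_eq_one {n : ℕ} {t : ℝ} (ht : |t| ≤ n) : cutoff n t = 1 := by
  have : (1:ℝ) ≤ (n : ℝ) + 1 - |t| := by linarith
  rw [cutoff, min_eq_left this, max_eq_right zero_le_one]

lemma cutoff_eq_zero {n : ℕ} {t : ℝ} (ht : (n : ℝ) + 1 ≤ |t|) : cutoff n t = 0 := by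
  have h1 : (n : ℝ) + 1 - |t| ≤ 0 := by linarith
  rw [cutoff, max_eq_left (le_trans (min_le_right _ _) h1)]

/-- Comparison for bounded continuous non-negative functions. -/
lemma compare_bc (hmom : IsMomentMeasure μ) (hpp : B.PseudoPositive μ)
    (k : ℕ) (l : Fin (B.a k)) {φ : ℝ → ℝ} (hc : Continuous φ) (M : ℝ)
    (hM : ∀ t, |φ t| ≤ M) (h0 : ∀ t, 0 ≤ φ t) :
    ∫ t, φ t ∂(Nrad B μ k l) ≤ ∫ t, φ t ∂(Prad B μ k l) := by
  haveI := isFiniteMeasure_Pmeas B μ hmom k l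
  haveI := isFiniteMeasure_Nmeas B μ hmom k l
  haveI : IsFiniteMeasure (Prad B μ k l) := by rw [Prad]; infer_instance
  haveI : IsFiniteMeasure (Nrad B μ k l) := by rw [Nrad]; infer_instance
  -- sequence of truncations
  set f : ℕ → ℝ → ℝ := fun n t => φ t * cutoff n t with hf
  have hfc : ∀ n, Continuous (f n) := fun n => hc.mul (cutoff_cont n)
  have hfcs : ∀ n, HasCompactSupport (f n) := by
    intro n
    apply HasCompactSupport.intro (isCompact_Icc (a := -((n:ℝ)+1)) (b := (n:ℝ)+1))
    intro t ht
    have : ((n:ℝ)+1) ≤ |t| := by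
      rcases abs_cases t with ⟨he, _⟩ | ⟨he, _⟩ <;> rw [he] <;>
        simp only [Set.mem_Icc, not_and_or, not_le] at ht <;> rcases ht with h' | h' <;> linarith
    simp [hf, cutoff_eq_zero this]
  have hf0 : ∀ n t, 0 ≤ f n t := fun n t => mul_nonneg (h0 t) (cutoff_nonneg n t)
  have hcmp : ∀ n, ∫ t, f n t ∂(Nrad B μ k l) ≤ ∫ t, f n t ∂(Prad B μ k l) :=
    fun n => compare_cc B μ hmom hpp k l (hfc n) (hfcs n) (hf0 n)
  -- dominated convergence on both sides
  have hbound : ∀ n, ∀ᵐ t ∂(Prad B μ k l), ‖f n t‖ ≤ M := by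
    intro n; refine Eventually.of_forall fun t => ?_
    rw [Real.norm_eq_abs, hf, abs_mul]
    calc |φ t| * |cutoff n t| ≤ M * 1 := by
          refine mul_le_mul (hM t) ?_ (abs_nonneg _) ((abs_nonneg (φ t)).trans (hM t))
          rw [abs_of_nonneg (cutoff_nonneg n t)]; exact cutoff_le_one n t
      _ = M := mul_one M
  have hbound' : ∀ n, ∀ᵐ t ∂(Nrad B μ k l), ‖f n t‖ ≤ M := by
    intro n; refine Eventually.of_forall fun t => ?_
    rw [Real.norm_eq_abs, hf, abs_mul]
    calc |φ t| * |cutoff n t| ≤ M * 1 := by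
          refine mul_le_mul (hM t) ?_ (abs_nonneg _) ((abs_nonneg (φ t)).trans (hM t))
          rw [abs_of_nonneg (cutoff_nonneg n t)]; exact cutoff_le_one n t
      _ = M := mul_one M
  have hlim : ∀ t : ℝ, Tendsto (fun n => f n t) atTop (𝓝 (φ t)) := by
    intro t
    refine Tendsto.congr' ?_ tendsto_const_nhds
    filter_upwards [eventually_ge_atTop (⌈|t|⌉₊)] with n hn
    have : |t| ≤ (n : ℝ) := le_trans (Nat.le_ceil _) (by exact_mod_cast hn)
    simp [hf, cutoff_eq_one this]
  have hmeas : ∀ n, AEStronglyMeasurable (f n) (Prad B μ k l) :=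
    fun n => (hfc n).aestronglyMeasurable
  have hmeas' : ∀ n, AEStronglyMeasurable (f n) (Nrad B μ k l) :=
    fun n => (hfc n).aestronglyMeasurable
  have hP := tendsto_integral_of_dominated_convergence (fun _ => M) hmeas
    (integrable_const M) hbound (Eventually.of_forall hlim)
  have hN := tendsto_integral_of_dominated_convergence (fun _ => M) hmeas'
    (integrable_const M) hbound' (Eventually.of_forall hlim)
  exact le_of_tendsto_of_tendsto' hN hP hcmp

/-- The central comparison: `Nrad ≤ Prad`. -/
lemma Nrad_le_Prad (hmom : IsMomentMeasure μ) (hpp : B.PseudoPositive μ)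
    (k : ℕ) (l : Fin (B.a k)) : Nrad B μ k l ≤ Prad B μ k l := by
  haveI := isFiniteMeasure_Pmeas B μ hmom k l
  haveI := isFiniteMeasure_Nmeas B μ hmom k l
  haveI : IsFiniteMeasure (Prad B μ k l) := by rw [Prad]; infer_instance
  haveI : IsFiniteMeasure (Nrad B μ k l) := by rw [Nrad]; infer_instance
  apply le_of_closed_le
  intro F hF
  have key : ∀ n, ∫⁻ t, (hF.apprSeq n t : ENNReal) ∂(Nrad B μ k l)
      ≤ ∫⁻ t, (hF.apprSeq n t : ENNReal) ∂(Prad B μ k l) := by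
    intro n
    set q := hF.apprSeq n with hq
    have hq1 : ∀ t, ((q t : ℝ)) ≤ 1 := by
      intro t
      exact_mod_cast HasOuterApproxClosed.apprSeq_apply_le_one hF n t
    have hqc : Continuous fun t => ((q t : ℝ)) :=
      NNReal.continuous_coe.comp q.continuous
    have hqb : ∀ t, |((q t : ℝ))| ≤ 1 := by
      intro t; rw [abs_of_nonneg (q t).coe_nonneg]; exact hq1 t
    have hqi : ∀ ρ : Measure ℝ, IsFiniteMeasure ρ → Integrable (fun t => ((q t : ℝ))) ρ := by
      intro ρ hρ
      refine Integrable.mono' (integrable_const (1:ℝ)) hqc.aestronglyMeasurable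
        (Eventually.of_forall fun t => ?_)
      rw [Real.norm_eq_abs]; exact hqb t
    rw [lintegral_coe_eq_integral (fun t => q t) (hqi _ ‹_›),
      lintegral_coe_eq_integral (fun t => q t) (hqi _ ‹_›)]
    apply ENNReal.ofReal_le_ofReal
    exact compare_bc B μ hmom hpp k l hqc 1 hqb (fun t => (q t).coe_nonneg)
  refine ge_of_tendsto' (HasOuterApproxClosed.tendsto_lintegral_apprSeq hF (Prad B μ k l))
    fun n => le_trans (HasOuterApproxClosed.measure_le_lintegral hF (Nrad B μ k l) n) (key n)

end Aux5
section Aux6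
open MeasureTheory Filter Topology

/-- Integrability of polynomially bounded functions w.r.t. a measure with finite moments. -/
lemma integrable_of_polyBnd_moments {G : Type*} [NormedAddCommGroup G] (ν : Measure ℝ)
    (hm : ∀ m : ℕ, Integrable (fun t => t ^ m) ν) {g : ℝ → G} (hg : Continuous g)
    (C : ℝ) (N : ℕ) (hb : ∀ t, ‖g t‖ ≤ C * (1 + |t|) ^ N) : Integrable g ν := by
  have base : Integrable (fun t => (1 + t ^ 2) ^ N) ν := by
    have : (fun t : ℝ => (1 + t ^ 2) ^ N)
        = fun t => ∑ j ∈ Finset.range (N + 1), t ^ (2 * (N - j)) * ((N.choose j : ℝ)) := by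
      funext t
      rw [add_pow]
      refine Finset.sum_congr rfl fun j hj => ?_
      rw [one_pow, one_mul, ← pow_mul', Nat.mul_comm]
    rw [this]
    exact integrable_finset_sum _ fun j _ => (hm (2 * (N - j))).mul_const _
  have maj : Integrable (fun t => |C| * (2 ^ N * (1 + t ^ 2) ^ N)) ν :=
    (base.const_mul ((2:ℝ) ^ N)).const_mul (|C|)
  refine maj.mono' hg.aestronglyMeasurable (Eventually.of_forall fun t => ?_)
  calc ‖g t‖ ≤ C * (1 + |t|) ^ N := hb t
    _ ≤ |C| * (2 * (1 + t ^ 2)) ^ N := by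
        have h2 : (1 + |t|) ^ N ≤ (2 * (1 + t ^ 2)) ^ N := by
          apply pow_le_pow_left₀ (by positivity)
          nlinarith [abs_nonneg t, sq_nonneg (|t| - 1), sq_abs t]
        calc C * (1 + |t|) ^ N ≤ |C| * (1 + |t|) ^ N :=
              mul_le_mul_of_nonneg_right (le_abs_self C) (by positivity)
          _ ≤ |C| * (2 * (1 + t ^ 2)) ^ N := mul_le_mul_of_nonneg_left h2 (abs_nonneg C)
    _ = |C| * (2 ^ N * (1 + t ^ 2) ^ N) := by rw [mul_pow]

variable {d : ℕ} (B : HarmonicBasis d) (μ : SignedMeasure (E d))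

/-- The component measure `μ_{k,l}`. -/
noncomputable def nufam (k : ℕ) (l : Fin (B.a k)) : Measure ℝ :=
  Prad B μ k l - Nrad B μ k l

/-- Master lemma for `nufam`. -/
lemma nufam_master {G : Type*} [NormedAddCommGroup G] [NormedSpace ℝ G]
    (hmom : IsMomentMeasure μ) (hpp : B.PseudoPositive μ) (k : ℕ) (l : Fin (B.a k))
    {g : ℝ → G} (hg : Continuous g) (C : ℝ) (N : ℕ)
    (hb : ∀ t, ‖g t‖ ≤ C * (1 + |t|) ^ N) :
    Integrable g (nufam B μ k l) ∧
      ∫ t, g t ∂(nufam B μ k l) = sInt μ (fun x => (B.Yf k l x) • g ‖x‖) := by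
  haveI := isFiniteMeasure_Pmeas B μ hmom k l
  haveI := isFiniteMeasure_Nmeas B μ hmom k l
  haveI : IsFiniteMeasure (Prad B μ k l) := by rw [Prad]; infer_instance
  haveI : IsFiniteMeasure (Nrad B μ k l) := by rw [Nrad]; infer_instance
  have hle := Nrad_le_Prad B μ hmom hpp k l
  obtain ⟨gP, gN, hcov⟩ := main_cov B μ hmom k l hg C N hb
  have hsum : nufam B μ k l + Nrad B μ k l = Prad B μ k l := by
    rw [nufam]; exact Measure.sub_add_cancel_of_le hle
  have hnu_le : nufam B μ k l ≤ Prad B μ k l := by rw [nufam]; exact Measure.sub_le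
  have gnu : Integrable g (nufam B μ k l) := gP.mono_measure hnu_le
  refine ⟨gnu, ?_⟩
  have : ∫ t, g t ∂(Prad B μ k l) = ∫ t, g t ∂(nufam B μ k l) + ∫ t, g t ∂(Nrad B μ k l) := by
    rw [← hsum, integral_add_measure gnu gN]
  rw [← hcov, this]
  abel

lemma nufam_Iio (hmom : IsMomentMeasure μ) (hpp : B.PseudoPositive μ)
    (k : ℕ) (l : Fin (B.a k)) : (nufam B μ k l) (Set.Iio 0) = 0 := by
  have hnu_le : nufam B μ k l ≤ Prad B μ k l := by rw [nufam]; exact Measure.sub_le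
  have := Measure.le_iff'.mp hnu_le (Set.Iio 0)
  rw [Prad_Iio B μ k l] at this
  exact le_antisymm this zero_le

lemma nufam_moments (hmom : IsMomentMeasure μ) (hpp : B.PseudoPositive μ)
    (k : ℕ) (l : Fin (B.a k)) (m : ℕ) :
    Integrable (fun t : ℝ => t ^ m) (nufam B μ k l) := by
  refine (nufam_master B μ hmom hpp k l (continuous_pow m) 1 m fun t => ?_).1
  rw [Real.norm_eq_abs, abs_pow, one_mul]
  exact pow_le_pow_left₀ (abs_nonneg t) (by linarith [abs_nonneg t]) m

lemma nufam_int (hmom : IsMomentMeasure μ) (hpp : B.PseudoPositive μ)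
    (k : ℕ) (l : Fin (B.a k)) {h : ℝ → ℝ} (hc : Continuous h) (hpb : PolyBnd h) :
    ∫ t, h t ∂(nufam B μ k l) = sInt μ (fun x => h ‖x‖ * B.Yf k l x) := by
  obtain ⟨C, N, hb⟩ := hpb
  have := (nufam_master B μ hmom hpp k l hc C N (fun t => by rw [Real.norm_eq_abs]; exact hb t)).2
  rw [this]
  congr 1
  funext x
  rw [smul_eq_mul, mul_comm]

lemma nufam_finite (hmom : IsMomentMeasure μ) (hpp : B.PseudoPositive μ)
    (k : ℕ) (l : Fin (B.a k)) : IsFiniteMeasure (nufam B μ k l) := by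
  haveI := isFiniteMeasure_Pmeas B μ hmom k l
  haveI : IsFiniteMeasure (Prad B μ k l) := by rw [Prad]; infer_instance
  have hnu_le : nufam B μ k l ≤ Prad B μ k l := by rw [nufam]; exact Measure.sub_le
  exact ⟨lt_of_le_of_lt (Measure.le_iff'.mp hnu_le Set.univ) (measure_lt_top _ _)⟩

end Aux6
section Aux7
open MeasureTheory Filter Topology

variable {d : ℕ} (B : HarmonicBasis d) (μ : SignedMeasure (E d))

/-- Complex version of the integral identity, for any component family member. -/
lemma complex_cov (hmom : IsMomentMeasure μ) (k : ℕ) (l : Fin (B.a k)) (ν : Measure ℝ)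
    (hm : ∀ m : ℕ, Integrable (fun t => t ^ m) ν)
    (hi : ∀ h : ℝ → ℝ, Continuous h → PolyBnd h →
      ∫ t, h t ∂ν = sInt μ (fun x => h ‖x‖ * B.Yf k l x))
    {g : ℝ → ℂ} (hg : Continuous g) (hpb : PolyBndC g) :
    ∫ t, g t ∂ν = sInt μ (fun x => g ‖x‖ * (B.Yf k l x : ℂ)) := by
  obtain ⟨C, N, hb⟩ := hpb
  set Y := B.Yf k l with hYdef
  have hY : Continuous Y := B.continuous_Yf k l
  have hgν : Integrable g ν := integrable_of_polyBnd_moments ν hm hg C N hb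
  have hre : Continuous fun t => (g t).re := Complex.continuous_re.comp hg
  have him : Continuous fun t => (g t).im := Complex.continuous_im.comp hg
  have hbre : ∀ t, |(g t).re| ≤ C * (1 + |t|) ^ N := fun t =>
    (Complex.abs_re_le_norm _).trans (hb t)
  have hbim : ∀ t, |(g t).im| ≤ C * (1 + |t|) ^ N := fun t =>
    (Complex.abs_im_le_norm _).trans (hb t)
  have e1 := hi (fun t => (g t).re) hre ⟨C, N, hbre⟩
  have e2 := hi (fun t => (g t).im) him ⟨C, N, hbim⟩
  set F : E d → ℂ := fun x => g ‖x‖ * (Y x : ℂ) with hF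
  have hFc : Continuous F := (hg.comp continuous_norm).mul (Complex.continuous_ofReal.comp hY)
  have hFi : Integrable F μ.totalVariation := by
    refine integrable_dom B μ hmom k l hFc.aestronglyMeasurable C N fun x => ?_
    rw [hF, norm_mul, Complex.norm_real, Real.norm_eq_abs]
    have := hb ‖x‖
    rw [abs_of_nonneg (norm_nonneg x)] at this
    exact mul_le_mul_of_nonneg_right this (abs_nonneg _)
  have hFp : Integrable F μ.toJordanDecomposition.posPart := hFi.mono_measure (posPart_le_tv μ)
  have hFn : Integrable F μ.toJordanDecomposition.negPart := hFi.mono_measure (negPart_le_tv μ)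
  have L := integral_re_add_im (μ := ν) (𝕜 := ℂ) hgν
  have Lp := integral_re_add_im (μ := μ.toJordanDecomposition.posPart) (𝕜 := ℂ) hFp
  have Ln := integral_re_add_im (μ := μ.toJordanDecomposition.negPart) (𝕜 := ℂ) hFn
  simp only [RCLike.re_to_complex, RCLike.im_to_complex, RCLike.I_to_complex] at L Lp Ln
  have hreF : (fun x => (F x).re) = fun x => (g ‖x‖).re * Y x := by
    funext x; simp [hF, Complex.mul_re]
  have himF : (fun x => (F x).im) = fun x => (g ‖x‖).im * Y x := by
    funext x; simp [hF, Complex.mul_im]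
  rw [sInt, ← Lp, ← Ln, hreF, himF, ← L, e1, e2, sInt, sInt]
  push_cast
  ring

/-- Uniqueness of the component measures. -/
lemma nufam_unique (hmom : IsMomentMeasure μ) (hpp : B.PseudoPositive μ)
    (k : ℕ) (l : Fin (B.a k)) (ν : Measure ℝ)
    (hm : ∀ m : ℕ, Integrable (fun t => t ^ m) ν)
    (hi : ∀ h : ℝ → ℝ, Continuous h → PolyBnd h →
      ∫ t, h t ∂ν = sInt μ (fun x => h ‖x‖ * B.Yf k l x)) :
    ν = nufam B μ k l := by
  haveI : IsFiniteMeasure ν := by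
    have h0 : Integrable (fun _ : ℝ => (1:ℝ)) ν := by simpa using hm 0
    rcases integrable_const_iff.mp h0 with h | h
    · exact absurd h one_ne_zero
    · exact h
  haveI := nufam_finite B μ hmom hpp k l
  apply ext_of_forall_lintegral_eq_of_IsFiniteMeasure
  intro f
  obtain ⟨Cb, hCb⟩ := f.bounded
  have hb : ∀ t : ℝ, |((f t : ℝ))| ≤ ((f 0 : ℝ) + Cb) * (1 + |t|) ^ 0 := by
    intro t
    rw [pow_zero, mul_one, abs_of_nonneg (f t).coe_nonneg]
    have h1 : dist (f t) (f 0) ≤ Cb := hCb t 0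
    rw [NNReal.dist_eq] at h1
    have h2 := le_of_abs_le h1
    linarith
  have hc : Continuous fun t : ℝ => ((f t : ℝ)) := NNReal.continuous_coe.comp f.continuous
  have i1 : Integrable (fun t : ℝ => ((f t : ℝ))) ν :=
    integrable_of_polyBnd_moments ν hm hc _ 0 (fun t => by rw [Real.norm_eq_abs]; exact hb t)
  have i2 : Integrable (fun t : ℝ => ((f t : ℝ))) (nufam B μ k l) :=
    integrable_of_polyBnd_moments _ (nufam_moments B μ hmom hpp k l) hc _ 0
      (fun t => by rw [Real.norm_eq_abs]; exact hb t)
  rw [lintegral_coe_eq_integral (fun t => f t) i1, lintegral_coe_eq_integral (fun t => f t) i2]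
  congr 1
  rw [hi _ hc ⟨_, 0, hb⟩, nufam_int B μ hmom hpp k l hc ⟨_, 0, hb⟩]

end Aux7
theorem statement3 {d : ℕ} (hd : 1 ≤ d) (B : HarmonicBasis d) (μ : SignedMeasure (E d))
    (hmom : IsMomentMeasure μ) (hpp : B.PseudoPositive μ) :
    (∃! ν : (k : ℕ) → Fin (B.a k) → Measure ℝ,
      ∀ k l, (ν k l) (Set.Iio 0) = 0 ∧ (∀ m : ℕ, Integrable (fun t => t ^ m) (ν k l)) ∧
        ∀ h : ℝ → ℝ, Continuous h → PolyBnd h →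
          ∫ t, h t ∂(ν k l) = sInt μ (fun x => h ‖x‖ * B.Yf k l x)) ∧
    ∀ ν : (k : ℕ) → Fin (B.a k) → Measure ℝ,
      (∀ k l, (ν k l) (Set.Iio 0) = 0 ∧ (∀ m : ℕ, Integrable (fun t => t ^ m) (ν k l)) ∧
        ∀ h : ℝ → ℝ, Continuous h → PolyBnd h →
          ∫ t, h t ∂(ν k l) = sInt μ (fun x => h ‖x‖ * B.Yf k l x)) →
      ∀ (K : ℕ) (g : (k : ℕ) → Fin (B.a k) → ℝ → ℂ),
        (∀ k l, Continuous (g k l)) → (∀ k l, PolyBndC (g k l)) →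
        sInt μ (fun x => ∑ k ∈ Finset.range (K + 1), ∑ l, g k l ‖x‖ * (B.Yf k l x : ℂ))
          = ∑ k ∈ Finset.range (K + 1), ∑ l, ∫ r, g k l r ∂(ν k l) := by
  constructor
  · refine ⟨fun k l => nufam B μ k l, fun k l =>
      ⟨nufam_Iio B μ hmom hpp k l, nufam_moments B μ hmom hpp k l,
        fun h hc hpb => nufam_int B μ hmom hpp k l hc hpb⟩, ?_⟩
    intro ν hν
    funext k l
    exact nufam_unique B μ hmom hpp k l (ν k l) (hν k l).2.1 (hν k l).2.2
  · intro ν hν K g hgc hgpb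
    have hterm : ∀ k (l : Fin (B.a k)), ∫ r, g k l r ∂(ν k l)
        = sInt μ (fun x => g k l ‖x‖ * (B.Yf k l x : ℂ)) :=
      fun k l => complex_cov B μ hmom k l (ν k l) (hν k l).2.1 (hν k l).2.2 (hgc k l) (hgpb k l)
    have hFi : ∀ k (l : Fin (B.a k)),
        Integrable (fun x => g k l ‖x‖ * (B.Yf k l x : ℂ)) μ.totalVariation := by
      intro k l
      obtain ⟨C, N, hb⟩ := hgpb k l
      refine integrable_dom B μ hmom k l
        ((((hgc k l).comp continuous_norm).mul
          (Complex.continuous_ofReal.comp (B.continuous_Yf k l))).aestronglyMeasurable) C N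
        fun x => ?_
      rw [norm_mul, Complex.norm_real, Real.norm_eq_abs]
      have := hb ‖x‖
      rw [abs_of_nonneg (norm_nonneg x)] at this
      exact mul_le_mul_of_nonneg_right this (abs_nonneg _)
    have hFp : ∀ k (l : Fin (B.a k)),
        Integrable (fun x => g k l ‖x‖ * (B.Yf k l x : ℂ)) μ.toJordanDecomposition.posPart :=
      fun k l => (hFi k l).mono_measure (posPart_le_tv μ)
    have hFn : ∀ k (l : Fin (B.a k)),
        Integrable (fun x => g k l ‖x‖ * (B.Yf k l x : ℂ)) μ.toJordanDecomposition.negPart :=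
      fun k l => (hFi k l).mono_measure (negPart_le_tv μ)
    rw [sInt]
    rw [integral_finset_sum _ (fun k _ => integrable_finset_sum _ fun l _ => hFp k l),
      integral_finset_sum _ (fun k _ => integrable_finset_sum _ fun l _ => hFn k l),
      ← Finset.sum_sub_distrib]
    refine Finset.sum_congr rfl fun k _ => ?_
    rw [integral_finset_sum _ (fun l _ => hFp k l), integral_finset_sum _ (fun l _ => hFn k l),
      ← Finset.sum_sub_distrib]
    refine Finset.sum_congr rfl fun l _ => ?_
    rw [hterm k l, sInt]
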